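/- There exists a binary unrooted level-3 phylogenetic network N on four leaves {a,a',b,b'} such that, setting A = {a,a'} and B = {b,b'}, the conditions d_m(a,b) + d_m(a',b') = d_m(a,b') + d_m(a',b) and d_m(a,a') + d_m(b,b') ≤ d_m(a,b) + d_m(a',b') − 2 hold, but no cut-edge of N induces the split A|B. -/

import Mathlib

open SimpleGraph

/-- The degree of a vertex (defined without decidability assumptions). -/
noncomputable def gdeg {V : Type} (G : SimpleGraph V) (v : V) : ℕ :=
  {u | G.Adj v u}.ncard

/-- The longest distance between two vertices: the supremum of the lengths of
paths between them. -/
noncomputable def ldistV {V : Type} (G : SimpleGraph V) (u v : V) : ℕ :=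
  sSup {n | ∃ p : G.Walk u v, p.IsPath ∧ p.length = n}

/-- A binary unrooted phylogenetic network on the leaf-label set `X`:
a simple connected graph whose degree-1 vertices (the leaves) are bijectively
labelled by `X`, every other vertex having degree 3, with at least two leaves. -/
structure PhyloNet (V X : Type) where
  G : SimpleGraph V
  conn : G.Connected
  leaf : X → V
  leafInj : Function.Injective leaf
  leafDeg : ∀ x : X, gdeg G (leaf x) = 1
  internalDeg : ∀ v : V, v ∉ Set.range leaf → gdeg G v = 3
  leafSurj : ∀ v : V, gdeg G v = 1 → v ∈ Set.range leaf
  twoLeaves : Nontrivial X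

namespace PhyloNet

variable {V W X : Type}

/-- Shortest distance between two leaves. -/
noncomputable def dm (N : PhyloNet V X) (x y : X) : ℕ :=
  N.G.dist (N.leaf x) (N.leaf y)

/-- Longest distance between two leaves. -/
noncomputable def dl (N : PhyloNet V X) (x y : X) : ℕ :=
  ldistV N.G (N.leaf x) (N.leaf y)

/-- Two networks on the same label set realize the same shortest distance matrix. -/
def SameDist (N : PhyloNet V X) (M : PhyloNet W X) : Prop :=
  ∀ x y : X, N.dm x y = M.dm x y

/-- Two networks realize the same longest distance matrix. -/
def SameLDist (N : PhyloNet V X) (M : PhyloNet W X) : Prop :=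
  ∀ x y : X, N.dl x y = M.dl x y

/-- Label-preserving isomorphism of networks. -/
def Isom (N : PhyloNet V X) (M : PhyloNet W X) : Prop :=
  ∃ φ : N.G ≃g M.G, ∀ x : X, φ (N.leaf x) = M.leaf x

/-- `N` is reconstructible from its shortest distance matrix. -/
def Reconstructible (N : PhyloNet V X) : Prop :=
  ∀ (W : Type) (M : PhyloNet W X), N.SameDist M → N.Isom M

/-- Two leaves form a cherry: they share a common neighbour. -/
def Cherry (N : PhyloNet V X) (x y : X) : Prop :=
  x ≠ y ∧ ∃ v : V, N.G.Adj (N.leaf x) v ∧ N.G.Adj (N.leaf y) v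

def NoCherry (N : PhyloNet V X) : Prop := ∀ x y : X, ¬ N.Cherry x y

/-- `uv` is a cut-edge. -/
def IsCutEdge (N : PhyloNet V X) (u v : V) : Prop :=
  N.G.Adj u v ∧ ¬ (N.G.deleteEdges {s(u, v)}).Reachable u v

/-- Leaf `x` lies on the `u`-side of the cut-edge `uv`. -/
def leafSide (N : PhyloNet V X) (u v : V) (x : X) : Prop :=
  (N.G.deleteEdges {s(u, v)}).Reachable (N.leaf x) u

/-- `A` is a part of a cut-edge induced split of `N`. -/
def IsSplitPart (N : PhyloNet V X) (A : Set X) : Prop :=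
  ∃ u v : V, N.IsCutEdge u v ∧ ∀ x : X, N.leafSide u v x ↔ x ∈ A

/-- Every cut-edge of `N` induces a unique split. -/
def UniqueSplits (N : PhyloNet V X) : Prop :=
  ∀ u v u' v' : V, N.IsCutEdge u v → N.IsCutEdge u' v' →
    ((∀ x : X, N.leafSide u v x ↔ N.leafSide u' v' x) ∨
      (∀ x : X, N.leafSide u v x ↔ N.leafSide v' u' x)) →
    s(u, v) = s(u', v')

/-- `l` is a chain of leaves: the neighbours of its members form a path. -/
def IsChain (N : PhyloNet V X) (l : List X) : Prop :=
  l ≠ [] ∧ ∃ vs : List V, ∃ h : vs.length = l.length,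
    vs.Nodup ∧ List.Chain' N.G.Adj vs ∧
    ∀ (i : ℕ) (hi : i < l.length),
      N.G.Adj (N.leaf (l.get ⟨i, hi⟩)) (vs.get ⟨i, by omega⟩)

/-- A maximal chain: not a subsequence of any other chain. -/
def MaxChain (N : PhyloNet V X) (l : List X) : Prop :=
  N.IsChain l ∧ ∀ m : List X, N.IsChain m → l.Sublist m → m = l

end PhyloNet

/-- A set of at least three vertices is 2-connected if it induces a connected
graph that stays connected after removal of any single vertex. -/
def TwoConn {V : Type} (G : SimpleGraph V) (B : Set V) : Prop :=
  3 ≤ B.ncard ∧ (G.induce B).Connected ∧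
    ∀ v ∈ B, (G.induce (B \ {v})).Connected

/-- A blob: a maximal 2-connected set of vertices (with at least three vertices). -/
def IsBlob {V : Type} (G : SimpleGraph V) (B : Set V) : Prop :=
  TwoConn G B ∧ ∀ C : Set V, TwoConn G C → B ⊆ C → C = B

/-- Number of edges with both endpoints in `B`. -/
noncomputable def edgesIn {V : Type} (G : SimpleGraph V) (B : Set V) : ℕ :=
  {e : Sym2 V | e ∈ G.edgeSet ∧ ∀ v ∈ e, v ∈ B}.ncard

/-- `G` is a level-(≤ k) network: every blob has cycle rank at most `k`,
i.e. removing at most `k` edges from each blob yields a tree. -/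
def LevelLE {V : Type} (G : SimpleGraph V) (k : ℕ) : Prop :=
  ∀ B : Set V, IsBlob G B → edgesIn G B ≤ (B.ncard - 1) + k

namespace PhyloNet

variable {V X : Type}

/-- A trivial cut-edge is one incident to a leaf. -/
def TrivialCutEdge (N : PhyloNet V X) (u v : V) : Prop :=
  u ∈ Set.range N.leaf ∨ v ∈ Set.range N.leaf

/-- A pendant blob: a blob incident to exactly one non-trivial cut-edge. -/
def IsPendantBlob (N : PhyloNet V X) (B : Set V) : Prop :=
  IsBlob N.G B ∧
    ∃! e : Sym2 V, ∃ u v : V, e = s(u, v) ∧ u ∈ B ∧ v ∉ B ∧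
      N.G.Adj u v ∧ ¬ N.TrivialCutEdge u v

/-- The leaves attached to (contained in) a blob. -/
def blobLeaves (N : PhyloNet V X) (B : Set V) : Set X :=
  {x : X | ∃ u ∈ B, N.G.Adj (N.leaf x) u}

/-- `N` has a leaf on each generator side: every vertex is within shortest
distance 2 of some leaf. -/
def LeafOnEachGenSide (N : PhyloNet V X) : Prop :=
  ∀ v : V, ∃ x : X, N.G.dist v (N.leaf x) ≤ 2

end PhyloNet

/-! ## Auxiliary material for the counterexample -/

section Aux

def chainB {α : Type} (f : α → α → Bool) : α → List α → Bool
  | _, [] => true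
  | a, b :: t => f a b && chainB f b t

lemma chain_of_chainB {α : Type} {R : α → α → Prop} [DecidableRel R] :
    ∀ (a : α) (l : List α), chainB (fun x y => decide (R x y)) a l = true → List.Chain R a l := by
  intro a l; induction l generalizing a with
  | nil => intro _; exact List.Chain.nil
  | cons b t ih =>
    intro h
    simp only [chainB, Bool.and_eq_true, decide_eq_true_eq] at h
    exact List.Chain.cons h.1 (ih b (by simpa using h.2))

lemma chain_walk {V : Type} {G : SimpleGraph V} :
    ∀ (l : List V) (a b : V), List.Chain G.Adj a (l ++ [b]) →
      ∃ p : G.Walk a b, p.length = l.length + 1 := by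
  intro l; induction l with
  | nil =>
    intro a b h
    rw [List.nil_append] at h
    cases h with
    | cons_cons hab _ => exact ⟨SimpleGraph.Walk.cons hab SimpleGraph.Walk.nil, rfl⟩
  | cons c t ih =>
    intro a b h
    rw [List.cons_append] at h
    cases h with
    | cons_cons hac h' =>
      obtain ⟨p, hp⟩ := ih c b h'
      exact ⟨SimpleGraph.Walk.cons hac p, by simp [hp]⟩

lemma reachable_of_chain {V : Type} {G : SimpleGraph V} (l : List V) (a b : V)
    (h : List.Chain G.Adj a (l ++ [b])) : G.Reachable a b :=
  ⟨(chain_walk l a b h).choose⟩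

lemma dist_le_chain {V : Type} {G : SimpleGraph V} (l : List V) (a b : V)
    (h : List.Chain G.Adj a (l ++ [b])) : G.dist a b ≤ l.length + 1 := by
  obtain ⟨p, hp⟩ := chain_walk l a b h
  simpa [hp] using SimpleGraph.dist_le p

lemma reach_along {V : Type} {G : SimpleGraph V} :
    ∀ (a : V) (l : List V), List.Chain G.Adj a l → ∀ v ∈ l, G.Reachable a v := by
  intro a l; induction l generalizing a with
  | nil => intro _ v hv; simp at hv
  | cons c t ih =>
    intro h v hv
    cases h with
    | cons_cons hac h' =>
      rcases List.mem_cons.mp hv with rfl | hv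
      · exact hac.reachable
      · exact (hac.reachable).trans (ih c h' v hv)

lemma connected_of_chain {V : Type} {G : SimpleGraph V} (a : V) (l : List V)
    (h : List.Chain G.Adj a l) (hcov : ∀ v, v = a ∨ v ∈ l) : G.Connected := by
  have ra : ∀ v : V, G.Reachable a v := by
    intro v
    rcases hcov v with rfl | hv
    · exact SimpleGraph.Reachable.refl _
    · exact reach_along a l h v hv
  rw [SimpleGraph.connected_iff]
  exact ⟨fun u v => (ra u).symm.trans (ra v), ⟨a⟩⟩

lemma walk_pot {V : Type} {G : SimpleGraph V} (f : V → ℕ)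
    (hf : ∀ u v, G.Adj u v → f v ≤ f u + 1) :
    ∀ {u v : V} (p : G.Walk u v), f v ≤ f u + p.length := by
  intro u v p
  induction p with
  | nil => simp
  | cons h q ih =>
    have := hf _ _ h
    simp only [SimpleGraph.Walk.length_cons]
    omega

lemma dist_pot {V : Type} {G : SimpleGraph V} (f : V → ℕ)
    (hf : ∀ u v, G.Adj u v → f v ≤ f u + 1) {u v : V} (h : G.Reachable u v) :
    f v ≤ f u + G.dist u v := by
  obtain ⟨p, hp⟩ := h.exists_walk_length_eq_dist
  simpa [hp] using walk_pot f hf p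

lemma no_reach_isolated {V : Type} {G : SimpleGraph V} {a b : V} (hne : a ≠ b)
    (h : ∀ z, ¬ G.Adj a z) : ¬ G.Reachable a b := by
  rintro ⟨p⟩
  cases p with
  | nil => exact hne rfl
  | cons h' _ => exact h _ h'

lemma gdeg_eq_degree {V : Type} [Fintype V] [DecidableEq V] (G : SimpleGraph V)
    [DecidableRel G.Adj] (v : V) : gdeg G v = G.degree v := by
  have h : {u | G.Adj v u} = (G.neighborFinset v : Set V) := by
    ext u; simp [SimpleGraph.mem_neighborFinset]
  unfold gdeg
  rw [h, Set.ncard_coe_finset]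
  rfl

/-! ## The concrete graph: an octagon 0-1-2-3-4-5-6-7 with crossing chords 1-5 and 2-6,
and leaves 8,9,10,11 attached at 0,7,3,4 respectively. -/

def edgeList : List (Fin 12 × Fin 12) :=
  [(0,1),(1,2),(2,3),(3,4),(4,5),(5,6),(6,7),(7,0),(1,5),(2,6),(8,0),(9,7),(10,3),(11,4)]

def adjB (u v : Fin 12) : Bool := edgeList.contains (u,v) || edgeList.contains (v,u)

def myG : SimpleGraph (Fin 12) where
  Adj u v := adjB u v = true
  symm := ⟨fun u v h => (by decide : ∀ u v : Fin 12, adjB u v = true → adjB v u = true) u v h⟩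
  loopless := ⟨fun u h => (by decide : ∀ u : Fin 12, ¬ adjB u u = true) u h⟩

instance : DecidableRel myG.Adj := fun u v => inferInstanceAs (Decidable (adjB u v = true))

instance (e : Sym2 (Fin 12)) : DecidableRel (myG.deleteEdges {e}).Adj := fun u v =>
  decidable_of_iff (myG.Adj u v ∧ ¬ s(u,v) = e) (by rw [SimpleGraph.deleteEdges_adj]; simp)

instance (B : Set (Fin 12)) [DecidablePred (· ∈ B)] : DecidableRel (myG.induce B).Adj :=
  fun u v => decidable_of_iff (myG.Adj u.1 v.1) Iff.rfl

def leafF : Fin 4 → Fin 12 := ![8, 9, 10, 11]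

lemma myconn : myG.Connected := by
  apply connected_of_chain (8 : Fin 12) [0,7,9,7,6,5,4,11,4,3,10,3,2,1]
  · exact chain_of_chainB _ _ (by decide)
  · decide

def S : Set (Fin 12) := {v | v.val < 8}

instance : DecidablePred (· ∈ S) := fun v => inferInstanceAs (Decidable (v.val < 8))

instance (k : Fin 12) : DecidablePred (· ∈ S \ {k}) := fun x =>
  decidable_of_iff (x.val < 8 ∧ ¬ x = k) (by simp [S, Set.mem_diff])

lemma twoConnS : TwoConn myG S := by
  refine ⟨?_, ?_, ?_⟩
  · rw [Set.ncard_eq_toFinset_card']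
    decide
  · apply connected_of_chain (⟨0, by decide⟩ : S)
      [⟨1, by decide⟩,⟨2, by decide⟩,⟨3, by decide⟩,⟨4, by decide⟩,⟨5, by decide⟩,
       ⟨6, by decide⟩,⟨7, by decide⟩]
    · exact chain_of_chainB _ _ (by decide)
    · decide
  · intro v hv
    fin_cases v
    · apply connected_of_chain (⟨7, by decide⟩ : ↥(S \ {(0:Fin 12)}))
        [⟨6, by decide⟩,⟨5, by decide⟩,⟨4, by decide⟩,⟨3, by decide⟩,⟨2, by decide⟩,⟨1, by decide⟩]
      · exact chain_of_chainB _ _ (by decide)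
      · decide
    · apply connected_of_chain (⟨0, by decide⟩ : ↥(S \ {(1:Fin 12)}))
        [⟨7, by decide⟩,⟨6, by decide⟩,⟨5, by decide⟩,⟨4, by decide⟩,⟨3, by decide⟩,⟨2, by decide⟩]
      · exact chain_of_chainB _ _ (by decide)
      · decide
    · apply connected_of_chain (⟨0, by decide⟩ : ↥(S \ {(2:Fin 12)}))
        [⟨1, by decide⟩,⟨5, by decide⟩,⟨4, by decide⟩,⟨3, by decide⟩,⟨4, by decide⟩,
         ⟨5, by decide⟩,⟨6, by decide⟩,⟨7, by decide⟩]
      · exact chain_of_chainB _ _ (by decide)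
      · decide
    · apply connected_of_chain (⟨4, by decide⟩ : ↥(S \ {(3:Fin 12)}))
        [⟨5, by decide⟩,⟨6, by decide⟩,⟨7, by decide⟩,⟨0, by decide⟩,⟨1, by decide⟩,⟨2, by decide⟩]
      · exact chain_of_chainB _ _ (by decide)
      · decide
    · apply connected_of_chain (⟨3, by decide⟩ : ↥(S \ {(4:Fin 12)}))
        [⟨2, by decide⟩,⟨1, by decide⟩,⟨0, by decide⟩,⟨7, by decide⟩,⟨6, by decide⟩,⟨5, by decide⟩]
      · exact chain_of_chainB _ _ (by decide)
      · decide
    · apply connected_of_chain (⟨4, by decide⟩ : ↥(S \ {(5:Fin 12)}))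
        [⟨3, by decide⟩,⟨2, by decide⟩,⟨1, by decide⟩,⟨0, by decide⟩,⟨7, by decide⟩,⟨6, by decide⟩]
      · exact chain_of_chainB _ _ (by decide)
      · decide
    · apply connected_of_chain (⟨7, by decide⟩ : ↥(S \ {(6:Fin 12)}))
        [⟨0, by decide⟩,⟨1, by decide⟩,⟨2, by decide⟩,⟨3, by decide⟩,⟨4, by decide⟩,⟨5, by decide⟩]
      · exact chain_of_chainB _ _ (by decide)
      · decide
    · apply connected_of_chain (⟨0, by decide⟩ : ↥(S \ {(7:Fin 12)}))
        [⟨1, by decide⟩,⟨2, by decide⟩,⟨3, by decide⟩,⟨4, by decide⟩,⟨5, by decide⟩,⟨6, by decide⟩]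
      · exact chain_of_chainB _ _ (by decide)
      · decide
    · exact absurd hv (by decide)
    · exact absurd hv (by decide)
    · exact absurd hv (by decide)
    · exact absurd hv (by decide)

def nbrF : Fin 12 → Fin 12 := ![0,0,0,0,0,0,0,0,0,7,3,4]

lemma leaves_not_in_twoConn {B : Set (Fin 12)} (hB : TwoConn myG B) : B ⊆ S := by
  obtain ⟨h3, hc, hdel⟩ := hB
  intro w hw
  by_contra hw8
  have hw8' : ¬ w.val < 8 := hw8
  have hnbr_uniq : ∀ z, myG.Adj w z → z = nbrF w :=
    fun z hz => (by decide : ∀ w z : Fin 12, ¬ w.val < 8 → myG.Adj w z → z = nbrF w) w z hw8' hz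
  have hnbr_adj : myG.Adj w (nbrF w) :=
    (by decide : ∀ w : Fin 12, ¬ w.val < 8 → myG.Adj w (nbrF w)) w hw8'
  set n := nbrF w with hn
  have hwne : w ≠ n := myG.ne_of_adj hnbr_adj
  by_cases hnB : n ∈ B
  · have hcon := hdel n hnB
    have hwB' : w ∈ B \ {n} := ⟨hw, by simpa using hwne⟩
    have h2 : 1 < (B \ {n}).ncard := by
      have := Set.ncard_diff_singleton_add_one hnB (B.toFinite)
      omega
    obtain ⟨u, huB, hune⟩ := Set.exists_ne_of_one_lt_ncard h2 w
    have hr := hcon.preconnected ⟨w, hwB'⟩ ⟨u, huB⟩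
    refine no_reach_isolated ?_ ?_ hr
    · intro hEq
      exact hune (congrArg Subtype.val hEq).symm
    · rintro ⟨z, hz⟩ hadj
      have hzn : z = n := hnbr_uniq z hadj
      exact hz.2 hzn
  · have h2 : 1 < B.ncard := by omega
    obtain ⟨u, huB, hune⟩ := Set.exists_ne_of_one_lt_ncard h2 w
    have hr := hc.preconnected ⟨w, hw⟩ ⟨u, huB⟩
    refine no_reach_isolated ?_ ?_ hr
    · intro hEq
      exact hune (congrArg Subtype.val hEq).symm
    · rintro ⟨z, hz⟩ hadj
      have hzn : z = n := hnbr_uniq z hadj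
      exact hnB (hzn ▸ hz)

def edgeFinset10 : Finset (Sym2 (Fin 12)) :=
  {s(0,1), s(1,2), s(2,3), s(3,4), s(4,5), s(5,6), s(6,7), s(7,0), s(1,5), s(2,6)}

lemma edgesIn_S : edgesIn myG S = 10 := by
  have hset : {e : Sym2 (Fin 12) | e ∈ myG.edgeSet ∧ ∀ v ∈ e, v ∈ S} = ↑edgeFinset10 := by
    ext e
    induction e using Sym2.ind with
    | _ x y =>
      simp only [Set.mem_setOf_eq, SimpleGraph.mem_edgeSet, Sym2.mem_iff, Finset.mem_coe]
      revert x y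
      decide
  unfold edgesIn
  rw [hset, Set.ncard_coe_finset]
  decide

lemma ncardS : S.ncard = 8 := by
  rw [Set.ncard_eq_toFinset_card']
  decide

lemma myLevel : LevelLE myG 3 := by
  intro B hB
  have hsub : B ⊆ S := leaves_not_in_twoConn hB.1
  have hSB : S = B := hB.2 S twoConnS hsub
  rw [← hSB, edgesIn_S, ncardS]

def f8 : Fin 12 → ℕ := ![1,2,3,4,4,3,3,2,0,3,5,5]
def f9 : Fin 12 → ℕ := ![2,3,3,4,4,3,2,1,3,0,5,5]

lemma hf8 : ∀ u v, myG.Adj u v → f8 v ≤ f8 u + 1 := by decide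
lemma hf9 : ∀ u v, myG.Adj u v → f9 v ≤ f9 u + 1 := by decide

def myN : PhyloNet (Fin 12) (Fin 4) where
  G := myG
  conn := myconn
  leaf := leafF
  leafInj := by decide
  leafDeg := by
    intro x
    rw [gdeg_eq_degree]
    revert x
    decide
  internalDeg := by
    intro v hv
    rw [gdeg_eq_degree]
    have hv' : ¬ ∃ x : Fin 4, leafF x = v := by simpa [Set.mem_range] using hv
    exact (by decide : ∀ v : Fin 12, (¬ ∃ x : Fin 4, leafF x = v) → myG.degree v = 3) v hv'
  leafSurj := by
    intro v hvdeg
    rw [gdeg_eq_degree] at hvdeg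
    exact Set.mem_range.mpr
      ((by decide : ∀ v : Fin 12, myG.degree v = 1 → ∃ x : Fin 4, leafF x = v) v hvdeg)
  twoLeaves := inferInstance

lemma dist_8_10 : myG.dist 8 10 = 5 := by
  have h1 : myG.dist 8 10 ≤ 5 := by
    simpa using dist_le_chain [0,1,2,3] 8 10 (chain_of_chainB _ _ (by decide))
  have h2 := dist_pot f8 hf8 (myconn.preconnected 8 10)
  have e1 : f8 10 = 5 := rfl
  have e2 : f8 8 = 0 := rfl
  rw [e1, e2] at h2
  omega

lemma dist_8_11 : myG.dist 8 11 = 5 := by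
  have h1 : myG.dist 8 11 ≤ 5 := by
    simpa using dist_le_chain [0,1,5,4] 8 11 (chain_of_chainB _ _ (by decide))
  have h2 := dist_pot f8 hf8 (myconn.preconnected 8 11)
  have e1 : f8 11 = 5 := rfl
  have e2 : f8 8 = 0 := rfl
  rw [e1, e2] at h2
  omega

lemma dist_9_10 : myG.dist 9 10 = 5 := by
  have h1 : myG.dist 9 10 ≤ 5 := by
    simpa using dist_le_chain [7,6,2,3] 9 10 (chain_of_chainB _ _ (by decide))
  have h2 := dist_pot f9 hf9 (myconn.preconnected 9 10)
  have e1 : f9 10 = 5 := rfl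
  have e2 : f9 9 = 0 := rfl
  rw [e1, e2] at h2
  omega

lemma dist_9_11 : myG.dist 9 11 = 5 := by
  have h1 : myG.dist 9 11 ≤ 5 := by
    simpa using dist_le_chain [7,6,5,4] 9 11 (chain_of_chainB _ _ (by decide))
  have h2 := dist_pot f9 hf9 (myconn.preconnected 9 11)
  have e1 : f9 11 = 5 := rfl
  have e2 : f9 9 = 0 := rfl
  rw [e1, e2] at h2
  omega

def cutCandidates : List (Fin 12 × Fin 12) :=
  [(0,1),(1,0),(1,2),(2,1),(2,3),(3,2),(3,4),(4,3),(4,5),(5,4),(5,6),(6,5),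
   (6,7),(7,6),(7,0),(0,7),(1,5),(5,1),(2,6),(6,2),
   (8,0),(0,8),(9,7),(7,9),(10,3),(3,10),(11,4),(4,11)]

end Aux

/-- there is a level-3 network on four leaves `{a, a', b, b'}`
(`0, 1, 2, 3`) in which the two distance conditions hold for
`A = {a, a'}`, `B = {b, b'}`, yet no cut-edge induces the split `A|B`. -/
theorem level3_counterexample_to_split_conditions :
    ∃ (V : Type) (N : PhyloNet V (Fin 4)),
      LevelLE N.G 3 ∧
      N.dm 0 2 + N.dm 1 3 = N.dm 0 3 + N.dm 1 2 ∧
      N.dm 0 1 + N.dm 2 3 + 2 ≤ N.dm 0 2 + N.dm 1 3 ∧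
      ¬ ∃ u v : V, N.IsCutEdge u v ∧
          ∀ x : Fin 4, N.leafSide u v x ↔ (x = 0 ∨ x = 1) := by
  refine ⟨Fin 12, myN, myLevel, ?_, ?_, ?_⟩
  · show myG.dist 8 10 + myG.dist 9 11 = myG.dist 8 11 + myG.dist 9 10
    rw [dist_8_10, dist_9_11, dist_8_11, dist_9_10]
  · show myG.dist 8 9 + myG.dist 10 11 + 2 ≤ myG.dist 8 10 + myG.dist 9 11
    have h1 : myG.dist 8 9 ≤ 3 := by
      simpa using dist_le_chain [0,7] 8 9 (chain_of_chainB _ _ (by decide))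
    have h2 : myG.dist 10 11 ≤ 3 := by
      simpa using dist_le_chain [3,4] 10 11 (chain_of_chainB _ _ (by decide))
    rw [dist_8_10, dist_9_11]
    omega
  · rintro ⟨u, v, ⟨hadj, hncut⟩, hsplit⟩
    have hadj' : myG.Adj u v := hadj
    have hncut' : ¬ (myG.deleteEdges {s(u, v)}).Reachable u v := hncut
    have hsplit' : ∀ x : Fin 4,
        (myG.deleteEdges {s(u, v)}).Reachable (leafF x) u ↔ (x = 0 ∨ x = 1) := hsplit
    clear hadj hncut hsplit
    have hmem : (u, v) ∈ cutCandidates :=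
      (by decide : ∀ a b : Fin 12, myG.Adj a b → (a, b) ∈ cutCandidates) u v hadj'
    simp only [cutCandidates, List.mem_cons, List.not_mem_nil, or_false,
      Prod.mk.injEq] at hmem
    rcases hmem with ⟨rfl,rfl⟩|⟨rfl,rfl⟩|⟨rfl,rfl⟩|⟨rfl,rfl⟩|⟨rfl,rfl⟩|⟨rfl,rfl⟩|⟨rfl,rfl⟩|
      ⟨rfl,rfl⟩|⟨rfl,rfl⟩|⟨rfl,rfl⟩|⟨rfl,rfl⟩|⟨rfl,rfl⟩|⟨rfl,rfl⟩|⟨rfl,rfl⟩|⟨rfl,rfl⟩|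
      ⟨rfl,rfl⟩|⟨rfl,rfl⟩|⟨rfl,rfl⟩|⟨rfl,rfl⟩|⟨rfl,rfl⟩|⟨rfl,rfl⟩|⟨rfl,rfl⟩|⟨rfl,rfl⟩|
      ⟨rfl,rfl⟩|⟨rfl,rfl⟩|⟨rfl,rfl⟩|⟨rfl,rfl⟩|⟨rfl,rfl⟩
    · exact hncut' (reachable_of_chain [7,6,2] _ _ (chain_of_chainB _ _ (by decide)))
    · exact hncut' (reachable_of_chain [2,6,7] _ _ (chain_of_chainB _ _ (by decide)))
    · exact hncut' (reachable_of_chain [5,6] _ _ (chain_of_chainB _ _ (by decide)))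
    · exact hncut' (reachable_of_chain [6,5] _ _ (chain_of_chainB _ _ (by decide)))
    · exact hncut' (reachable_of_chain [6,5,4] _ _ (chain_of_chainB _ _ (by decide)))
    · exact hncut' (reachable_of_chain [4,5,6] _ _ (chain_of_chainB _ _ (by decide)))
    · exact hncut' (reachable_of_chain [2,6,5] _ _ (chain_of_chainB _ _ (by decide)))
    · exact hncut' (reachable_of_chain [5,6,2] _ _ (chain_of_chainB _ _ (by decide)))
    · exact hncut' (reachable_of_chain [3,2,6] _ _ (chain_of_chainB _ _ (by decide)))
    · exact hncut' (reachable_of_chain [6,2,3] _ _ (chain_of_chainB _ _ (by decide)))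
    · exact hncut' (reachable_of_chain [1,2] _ _ (chain_of_chainB _ _ (by decide)))
    · exact hncut' (reachable_of_chain [2,1] _ _ (chain_of_chainB _ _ (by decide)))
    · exact hncut' (reachable_of_chain [2,1,0] _ _ (chain_of_chainB _ _ (by decide)))
    · exact hncut' (reachable_of_chain [0,1,2] _ _ (chain_of_chainB _ _ (by decide)))
    · exact hncut' (reachable_of_chain [6,2,1] _ _ (chain_of_chainB _ _ (by decide)))
    · exact hncut' (reachable_of_chain [1,2,6] _ _ (chain_of_chainB _ _ (by decide)))
    · exact hncut' (reachable_of_chain [2,6] _ _ (chain_of_chainB _ _ (by decide)))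
    · exact hncut' (reachable_of_chain [6,2] _ _ (chain_of_chainB _ _ (by decide)))
    · exact hncut' (reachable_of_chain [1,5] _ _ (chain_of_chainB _ _ (by decide)))
    · exact hncut' (reachable_of_chain [5,1] _ _ (chain_of_chainB _ _ (by decide)))
    -- leaf edge (8,0)
    · exact no_reach_isolated (by decide)
        (by decide : ∀ z : Fin 12, ¬ (myG.deleteEdges {s((8:Fin 12),(0:Fin 12))}).Adj 8 z)
        ((hsplit' 1).mpr (Or.inr rfl)).symm
    -- leaf edge (0,8)
    · exact no_reach_isolated (by decide)
        (by decide : ∀ z : Fin 12, ¬ (myG.deleteEdges {s((0:Fin 12),(8:Fin 12))}).Adj 8 z)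
        ((hsplit' 0).mpr (Or.inl rfl))
    -- leaf edge (9,7)
    · exact no_reach_isolated (by decide)
        (by decide : ∀ z : Fin 12, ¬ (myG.deleteEdges {s((9:Fin 12),(7:Fin 12))}).Adj 9 z)
        ((hsplit' 0).mpr (Or.inl rfl)).symm
    -- leaf edge (7,9)
    · exact absurd ((hsplit' 2).mp
        (reachable_of_chain [3,2,6] _ _ (chain_of_chainB _ _ (by decide)))) (by decide)
    -- leaf edge (10,3)
    · exact no_reach_isolated (by decide)
        (by decide : ∀ z : Fin 12, ¬ (myG.deleteEdges {s((10:Fin 12),(3:Fin 12))}).Adj 10 z)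
        ((hsplit' 0).mpr (Or.inl rfl)).symm
    -- leaf edge (3,10)
    · exact absurd ((hsplit' 3).mp
        (reachable_of_chain [4] _ _ (chain_of_chainB _ _ (by decide)))) (by decide)
    -- leaf edge (11,4)
    · exact no_reach_isolated (by decide)
        (by decide : ∀ z : Fin 12, ¬ (myG.deleteEdges {s((11:Fin 12),(4:Fin 12))}).Adj 11 z)
        ((hsplit' 0).mpr (Or.inl rfl)).symm
    -- leaf edge (4,11)
    · exact absurd ((hsplit' 2).mp
        (reachable_of_chain [3] _ _ (chain_of_chainB _ _ (by decide)))) (by decide)
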